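/- Define for ε ∈ (0,1], d ∈ ℕ the bound B(ε,d) := C · (√d · ln d) if ε ≥ exp(−4√d), and B(ε,d) := C · (ln ε^{-1})² if ε < exp(−4√d), where C > 1 is a constant. Then for all s > 0 and t > 1/2, and every sequence (ε_k, d_k) ∈ (0,1)×ℕ with ε_k^{-1} + d_k → ∞, one has B(ε_k, d_k) / (ε_k^{-s} + d_k^t) → 0. -/

import Mathlib

open Filter Topology Real

/-- With `B(ε,d) = C √d ln d` if `ε ≥ exp(-4√d)` and `B(ε,d) = C (ln ε⁻¹)²`
otherwise, for all `s > 0` and `t > 1/2` the quotient `B(ε_k,d_k)/(ε_k^{-s}+d_k^t)`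
tends to `0` whenever `ε_k⁻¹ + d_k → ∞`. -/
theorem stmt13 (C : ℝ) (hC : 1 < C) (B : ℝ → ℕ → ℝ)
    (hB : ∀ (e : ℝ) (d : ℕ), B e d =
      if Real.exp (-4 * Real.sqrt d) ≤ e then C * (Real.sqrt d * Real.log d)
      else C * (Real.log e⁻¹) ^ 2)
    (s t : ℝ) (hs : 0 < s) (ht : 1 / 2 < t)
    (ε : ℕ → ℝ) (d : ℕ → ℕ) (hε : ∀ k, ε k ∈ Set.Ioo (0 : ℝ) 1) (hd : ∀ k, 1 ≤ d k)
    (hto : Tendsto (fun k => (ε k)⁻¹ + (d k : ℝ)) atTop atTop) :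
    Tendsto (fun k => B (ε k) (d k) / ((ε k) ^ (-s) + (d k : ℝ) ^ t))
      atTop (nhds 0) := by
  have hC0 : (0:ℝ) < C := lt_trans one_pos hC
  -- Fact A : C * log x / x^(t-1/2) → 0
  have factA : Tendsto (fun x : ℝ => C * (Real.log x / x ^ (t - 1/2))) atTop (nhds 0) := by
    have h := (isLittleO_log_rpow_atTop (by linarith : (0:ℝ) < t - 1/2)).tendsto_div_nhds_zero
    simpa using h.const_mul C
  -- Fact B : C * (L^2 * exp (-(s*L))) → 0
  have factB : Tendsto (fun L : ℝ => C * (L ^ 2 * Real.exp (-(s * L)))) atTop (nhds 0) := by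
    have h1 : Tendsto (fun L : ℝ => (s * L) ^ 2 * Real.exp (-(s * L))) atTop (nhds 0) :=
      (tendsto_pow_mul_exp_neg_atTop_nhds_zero 2).comp (tendsto_id.const_mul_atTop hs)
    have h2 := h1.const_mul (C / s ^ 2)
    rw [mul_zero] at h2
    refine h2.congr fun L => ?_
    have hs2 : s ^ 2 ≠ 0 := pow_ne_zero 2 hs.ne'
    field_simp
  -- algebraic key for case 1
  have key : ∀ x : ℝ, 1 ≤ x →
      C * (Real.sqrt x * Real.log x) / x ^ t = C * (Real.log x / x ^ (t - 1/2)) := by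
    intro x hx
    have hx0 : (0:ℝ) < x := lt_of_lt_of_le one_pos hx
    rw [Real.sqrt_eq_rpow, Real.rpow_sub hx0]
    have h2 : x ^ ((1:ℝ)/2) ≠ 0 := (Real.rpow_pos_of_pos hx0 _).ne'
    have h3 : x ^ t ≠ 0 := (Real.rpow_pos_of_pos hx0 _).ne'
    field_simp
  rw [NormedAddCommGroup.tendsto_nhds_zero]
  intro δ hδ
  obtain ⟨X0, hX0⟩ := (eventually_atTop.1 (factA.eventually (gt_mem_nhds hδ)))
  obtain ⟨L0, hL0⟩ := (eventually_atTop.1 (factB.eventually (gt_mem_nhds hδ)))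
  set D : ℝ := max X0 1 with hD
  set L1 : ℝ := max L0 1 with hL1
  set M0 : ℝ := max (Real.exp (4 * Real.sqrt D) + D) (2 * Real.exp L1) with hM0
  filter_upwards [hto.eventually (eventually_ge_atTop M0)] with k hk
  obtain ⟨hε0, hε1⟩ := hε k
  have hεinv : (1:ℝ) < (ε k)⁻¹ := one_lt_inv_iff₀.2 ⟨hε0, hε1⟩
  have hd1 : (1:ℝ) ≤ (d k : ℝ) := by exact_mod_cast hd k
  have hdpos : (0:ℝ) < (d k : ℝ) := lt_of_lt_of_le one_pos hd1
  have hdenpos : 0 < (ε k) ^ (-s) + (d k : ℝ) ^ t :=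
    add_pos (Real.rpow_pos_of_pos hε0 _) (Real.rpow_pos_of_pos hdpos _)
  rw [hB]
  by_cases hif : Real.exp (-4 * Real.sqrt (d k)) ≤ ε k
  · rw [if_pos hif]
    have hlog : 0 ≤ Real.log (d k) := Real.log_nonneg hd1
    have hnum : 0 ≤ C * (Real.sqrt (d k) * Real.log (d k)) :=
      mul_nonneg hC0.le (mul_nonneg (Real.sqrt_nonneg _) hlog)
    -- show d k ≥ D
    have hdD : D ≤ (d k : ℝ) := by
      by_contra hcon
      push_neg at hcon
      have h1 : (ε k)⁻¹ ≤ Real.exp (4 * Real.sqrt (d k)) := by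
        have := inv_anti₀ (Real.exp_pos _) hif
        rwa [← Real.exp_neg, show -(-4 * Real.sqrt (d k)) = 4 * Real.sqrt (d k) by ring]
          at this
      have h2 : Real.exp (4 * Real.sqrt (d k)) ≤ Real.exp (4 * Real.sqrt D) := by
        apply Real.exp_le_exp.2
        have := Real.sqrt_le_sqrt hcon.le
        linarith
      have : (ε k)⁻¹ + (d k : ℝ) < Real.exp (4 * Real.sqrt D) + D := by linarith
      have : M0 ≤ Real.exp (4 * Real.sqrt D) + D := le_trans hk this.le
      exact absurd (le_max_left _ _ : Real.exp (4 * Real.sqrt D) + D ≤ M0) (by linarith)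
    have hbound : C * (Real.sqrt (d k) * Real.log (d k)) / ((ε k) ^ (-s) + (d k : ℝ) ^ t)
        ≤ C * (Real.sqrt (d k) * Real.log (d k)) / (d k : ℝ) ^ t := by
      apply div_le_div_of_nonneg_left hnum (Real.rpow_pos_of_pos hdpos _)
      have : 0 < (ε k) ^ (-s) := Real.rpow_pos_of_pos hε0 _
      linarith
    have hfinal : C * (Real.sqrt (d k) * Real.log (d k)) / (d k : ℝ) ^ t < δ := by
      rw [key _ hd1]
      exact hX0 _ (le_trans (le_max_left _ _) hdD)
    rw [Real.norm_eq_abs, abs_of_nonneg (div_nonneg hnum hdenpos.le)]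
    exact lt_of_le_of_lt hbound hfinal
  · rw [if_neg hif]
    push_neg at hif
    set L : ℝ := Real.log (ε k)⁻¹ with hLdef
    have hLpos : 0 < L := Real.log_pos hεinv
    have hεL : (ε k)⁻¹ = Real.exp L := (Real.exp_log (inv_pos.2 hε0)).symm
    have hL4 : 4 * Real.sqrt (d k) < L := by
      have h1 : Real.log (ε k) < Real.log (Real.exp (-4 * Real.sqrt (d k))) :=
        Real.log_lt_log hε0 hif
      rw [Real.log_exp] at h1
      rw [hLdef, Real.log_inv]
      linarith
    have hsq1 : 1 ≤ Real.sqrt (d k) := Real.one_le_sqrt.2 hd1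
    have hdL : (d k : ℝ) < L ^ 2 / 16 := by
      have h1 : Real.sqrt (d k) ^ 2 = (d k : ℝ) := Real.sq_sqrt hdpos.le
      nlinarith [Real.sqrt_nonneg (d k : ℝ)]
    have hexpL : L ^ 2 / 4 ≤ Real.exp L := by
      have h1 := Real.add_one_le_exp (L / 2)
      have h2 : Real.exp L = Real.exp (L / 2) * Real.exp (L / 2) := by
        rw [← Real.exp_add]; ring_nf
      nlinarith
    -- show L ≥ L1
    have hLL1 : L1 ≤ L := by
      by_contra hcon
      push_neg at hcon
      have h3 : (ε k)⁻¹ + (d k : ℝ) < 2 * Real.exp L := by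
        rw [hεL]; nlinarith
      have h4 : Real.exp L < Real.exp L1 := Real.exp_lt_exp.2 hcon
      have h5 : (2 * Real.exp L1 : ℝ) ≤ M0 := le_max_right _ _
      linarith
    have hεs : (ε k) ^ (-s) = Real.exp (s * L) := by
      rw [Real.rpow_def_of_pos hε0]
      congr 1
      have : Real.log (ε k) = -L := by rw [hLdef, Real.log_inv]; ring
      rw [this]; ring
    have hnum : 0 ≤ C * Real.log (ε k)⁻¹ ^ 2 := mul_nonneg hC0.le (sq_nonneg _)
    have hbound : C * Real.log (ε k)⁻¹ ^ 2 / ((ε k) ^ (-s) + (d k : ℝ) ^ t)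
        ≤ C * (L ^ 2 * Real.exp (-(s * L))) := by
      have h1 : C * Real.log (ε k)⁻¹ ^ 2 / ((ε k) ^ (-s) + (d k : ℝ) ^ t)
          ≤ C * Real.log (ε k)⁻¹ ^ 2 / (ε k) ^ (-s) := by
        apply div_le_div_of_nonneg_left hnum (Real.rpow_pos_of_pos hε0 _)
        have : 0 < (d k : ℝ) ^ t := Real.rpow_pos_of_pos hdpos _
        linarith
      have h2 : C * Real.log (ε k)⁻¹ ^ 2 / (ε k) ^ (-s)
          = C * (L ^ 2 * Real.exp (-(s * L))) := by
        rw [hεs, Real.exp_neg, ← hLdef]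
        ring
      linarith
    have hfinal : C * (L ^ 2 * Real.exp (-(s * L))) < δ :=
      hL0 _ (le_trans (le_max_left _ _) hLL1)
    rw [Real.norm_eq_abs, abs_of_nonneg (div_nonneg hnum hdenpos.le)]
    linarith
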